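/- Two point processes on ℝ^d with the same avoidance functions are equal in distribution; that is, a simple point process is completely determined by the probabilities P(N(K) = 0) over compact sets K. -/

import Mathlib

open MeasureTheory ProbabilityTheory Real
open scoped ENNReal

/-- `μ` is a simple, locally finite counting measure: it is finite on compact sets
and is the counting measure of some set of points. -/
def IsSimpleCountingMeasure {E : Type*} [MeasurableSpace E] [TopologicalSpace E]
    (μ : Measure E) : Prop :=
  (∀ K : Set E, IsCompact K → μ K < ⊤) ∧ ∃ s : Set E, μ = Measure.count.restrict s

namespace SimplePPAux

open Filter

variable {d : ℕ}

abbrev Euc (d : ℕ) := EuclideanSpace ℝ (Fin d)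

/-- Dyadic half-open cell at level `n` with index `z`. -/
def cell (n : ℕ) (z : Fin d → ℤ) : Set (Euc d) := {x | ∀ i, ⌊(2:ℝ)^n * x i⌋ = z i}

/-- Closed inner approximations of a cell. -/
def cellC (n m : ℕ) (z : Fin d → ℤ) : Set (Euc d) :=
  {x | ∀ i, (z i : ℝ) ≤ 2^n * x i ∧ 2^n * x i ≤ (z i : ℝ) + 1 - 1/(m+1)}

lemma isClosed_cellC (n m : ℕ) (z : Fin d → ℤ) : IsClosed (cellC n m z : Set (Euc d)) := by
  have : (cellC n m z : Set (Euc d)) =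
      ⋂ i, (fun x : Euc d => (2:ℝ)^n * x i) ⁻¹' (Set.Icc (z i) ((z i : ℝ) + 1 - 1/(m+1))) := by
    ext x; simp [cellC, Set.mem_iInter, Set.mem_Icc]
  rw [this]
  exact isClosed_iInter fun i =>
    (isClosed_Icc.preimage (continuous_const.mul (EuclideanSpace.proj i).continuous))

lemma isCompact_cellC (n m : ℕ) (z : Fin d → ℤ) : IsCompact (cellC n m z : Set (Euc d)) := by
  have heq : (cellC n m z : Set (Euc d)) =
      (EuclideanSpace.equiv (Fin d) ℝ).toHomeomorph ⁻¹'
        (Set.univ.pi fun i => Set.Icc ((z i : ℝ)/2^n) (((z i : ℝ) + 1 - 1/(m+1))/2^n)) := by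
    ext x
    have h2 : (0:ℝ) < 2^n := by positivity
    simp only [Set.mem_preimage, Set.mem_univ_pi, cellC, Set.mem_setOf_eq, Set.mem_Icc]
    constructor
    · intro h i
      have hx : (EuclideanSpace.equiv (Fin d) ℝ).toHomeomorph x i = x i := rfl
      rw [hx]
      constructor
      · rw [div_le_iff₀ h2]; linarith [(h i).1]
      · rw [le_div_iff₀ h2]; linarith [(h i).2]
    · intro h i
      have hx : (EuclideanSpace.equiv (Fin d) ℝ).toHomeomorph x i = x i := rfl
      obtain ⟨h1, h2'⟩ := h i
      rw [hx] at h1 h2'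
      rw [div_le_iff₀ h2] at h1
      rw [le_div_iff₀ h2] at h2'
      constructor <;> linarith
  rw [heq]
  exact (Homeomorph.isCompact_preimage _).2 (isCompact_univ_pi fun i => isCompact_Icc)

lemma cell_eq_iUnion (n : ℕ) (z : Fin d → ℤ) :
    (cell n z : Set (Euc d)) = ⋃ m, cellC n m z := by
  ext x
  simp only [cell, Set.mem_setOf_eq, Set.mem_iUnion, cellC]
  constructor
  · intro h
    have hb : ∀ i, (z i : ℝ) ≤ 2^n * x i ∧ 2^n * x i < (z i : ℝ) + 1 :=
      fun i => Int.floor_eq_iff.mp (h i)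
    choose f hf using fun i => exists_nat_one_div_lt
      (show (0:ℝ) < (z i : ℝ) + 1 - 2^n * x i by linarith [(hb i).2])
    refine ⟨Finset.univ.sup f, fun i => ⟨(hb i).1, ?_⟩⟩
    have hle : (1:ℝ)/((Finset.univ.sup f : ℕ) + 1) ≤ 1/((f i : ℝ) + 1) := by
      apply one_div_le_one_div_of_le (by positivity)
      have := Finset.le_sup (f := f) (Finset.mem_univ i)
      exact_mod_cast Nat.add_le_add_right this 1
    linarith [hf i]
  · rintro ⟨m, hm⟩ i
    refine Int.floor_eq_iff.mpr ⟨(hm i).1, ?_⟩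
    have : (0:ℝ) < 1/((m:ℝ)+1) := by positivity
    linarith [(hm i).2]

lemma measurableSet_cell (n : ℕ) (z : Fin d → ℤ) : MeasurableSet (cell n z : Set (Euc d)) := by
  rw [cell_eq_iUnion]
  exact MeasurableSet.iUnion fun m => (isClosed_cellC n m z).measurableSet

/-- The dyadic index of a point at level `n`. -/
noncomputable def idx (n : ℕ) (x : Euc d) : Fin d → ℤ := fun i => ⌊(2:ℝ)^n * x i⌋

lemma mem_cell_iff {n : ℕ} {z : Fin d → ℤ} {x : Euc d} : x ∈ cell n z ↔ idx n x = z := by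
  simp [cell, idx, funext_iff]

lemma eventually_idx_ne {x y : Euc d} (hxy : x ≠ y) :
    ∀ᶠ n : ℕ in atTop, idx (d := d) n x ≠ idx n y := by
  obtain ⟨i, hi⟩ : ∃ i, x i ≠ y i := by
    by_contra h; push_neg at h; exact hxy (by ext j; exact h j)
  have hpos : (0:ℝ) < |x i - y i| := abs_pos.mpr (sub_ne_zero.mpr hi)
  obtain ⟨n₀, hn₀⟩ := pow_unbounded_of_one_lt (1 / |x i - y i|) (one_lt_two (α := ℝ))
  rw [eventually_atTop]
  refine ⟨n₀, fun n hn heq => ?_⟩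
  have h1 : (1:ℝ) < 2^n * |x i - y i| := by
    have h2 : (2:ℝ)^n₀ ≤ 2^n := pow_le_pow_right₀ one_le_two hn
    rw [div_lt_iff₀ hpos] at hn₀
    nlinarith
  have heqi := congrFun heq i
  simp only [idx] at heqi
  have hfx := Int.floor_le ((2:ℝ)^n * x i)
  have hfy := Int.floor_le ((2:ℝ)^n * y i)
  have hfx' := Int.lt_floor_add_one ((2:ℝ)^n * x i)
  have hfy' := Int.lt_floor_add_one ((2:ℝ)^n * y i)
  rw [heqi] at hfx hfx'
  have : |2^n * x i - 2^n * y i| < 1 := by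
    rw [abs_lt]; constructor <;> [linarith; linarith]
  rw [← mul_sub, abs_mul, abs_pow, abs_two] at this
  linarith


/-- The avoidance sets of compact sets. -/
def avoidSets (d : ℕ) : Set (Set (Measure (Euc d))) :=
  {A | ∃ K : Set (Euc d), IsCompact K ∧ A = {μ : Measure (Euc d) | μ K = 0}}

/-- The σ-algebra generated by avoidance sets. -/
def G (d : ℕ) : MeasurableSpace (Measure (Euc d)) := .generateFrom (avoidSets d)

lemma isPiSystem_avoidSets : IsPiSystem (avoidSets d) := by
  rintro _ ⟨K, hK, rfl⟩ _ ⟨K', hK', rfl⟩ -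
  refine ⟨K ∪ K', hK.union hK', ?_⟩
  ext μ
  simp [Set.mem_inter_iff, measure_union_null_iff]

lemma G_le : G d ≤ (inferInstance : MeasurableSpace (Measure (Euc d))) := by
  rw [G, MeasurableSpace.generateFrom_le_iff]
  rintro _ ⟨K, hK, rfl⟩
  exact Measure.measurable_coe hK.measurableSet (measurableSet_singleton 0)

lemma avoid_mem_G {B : Set (Euc d)} (A : ℕ → Set (Euc d)) (hA : ∀ m, IsCompact (A m))
    (hU : B = ⋃ m, A m) : MeasurableSet[G d] {μ : Measure (Euc d) | μ B = 0} := by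
  have h : {μ : Measure (Euc d) | μ B = 0} = ⋂ m, {μ : Measure (Euc d) | μ (A m) = 0} := by
    ext μ; simp [hU, measure_iUnion_null_iff]
  rw [h]
  exact MeasurableSet.iInter fun m =>
    MeasurableSpace.measurableSet_generateFrom ⟨A m, hA m, rfl⟩

lemma avoid_compact_mem_G {K : Set (Euc d)} (hK : IsCompact K) :
    MeasurableSet[G d] {μ : Measure (Euc d) | μ K = 0} :=
  MeasurableSpace.measurableSet_generateFrom ⟨K, hK, rfl⟩

lemma avoidCell_mem_G {K : Set (Euc d)} (hK : IsCompact K) (n : ℕ) (z : Fin d → ℤ) :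
    MeasurableSet[G d] {μ : Measure (Euc d) | μ (K ∩ cell n z) = 0} :=
  avoid_mem_G (fun m => K ∩ cellC n m z)
    (fun m => hK.inter_right (isClosed_cellC n m z))
    (by rw [cell_eq_iUnion, Set.inter_iUnion])

/-- The cell-counting approximation at level `n`. -/
noncomputable def cnt (K : Set (Euc d)) (n : ℕ) (μ : Measure (Euc d)) : ℝ≥0∞ :=
  ∑' z : Fin d → ℤ, if μ (K ∩ cell n z) = 0 then 0 else 1

lemma measurable_cnt {K : Set (Euc d)} (hK : IsCompact K) (n : ℕ) :
    Measurable[G d] (cnt (d := d) K n) := by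
  apply Measurable.ennreal_tsum (mα := G d)
  intro z
  exact Measurable.ite (avoidCell_mem_G hK n z) measurable_const measurable_const

lemma cnt_eventually_eq {K : Set (Euc d)} (hK : IsCompact K) {μ : Measure (Euc d)}
    (hμ : IsSimpleCountingMeasure μ) : ∀ᶠ n : ℕ in atTop, cnt K n μ = μ K := by
  obtain ⟨hfin, s, rfl⟩ := hμ
  set F : Set (Euc d) := K ∩ s with hF
  have hμK : (Measure.count.restrict s) K = Measure.count F :=
    Measure.restrict_apply hK.measurableSet
  have hFfin : F.Finite := by
    rw [← Measure.count_apply_lt_top, ← hμK]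
    exact hfin K hK
  -- eventual separation of all pairs of points in F
  have hsep : ∀ᶠ n : ℕ in atTop, ∀ p ∈ (hFfin.prod hFfin).toFinset,
      p.1 ≠ p.2 → idx n p.1 ≠ idx n p.2 := by
    rw [eventually_all_finset]
    intro p _
    rcases eq_or_ne p.1 p.2 with h | h
    · exact Eventually.of_forall fun n hne => absurd h hne
    · exact (eventually_idx_ne h).mono fun n hn _ => hn
  filter_upwards [hsep] with n hn
  have hinj : Set.InjOn (idx n) F := by
    intro x hx y hy hxy
    by_contra hne
    exact hn (x, y) (by simp [Set.Finite.mem_toFinset, Set.mem_prod, hx, hy]) hne hxy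
  -- each cell's measure
  have hcell : ∀ z, (Measure.count.restrict s) (K ∩ cell n z) = Measure.count (F ∩ cell n z) := by
    intro z
    rw [Measure.restrict_apply (hK.measurableSet.inter (measurableSet_cell n z))]
    congr 1
    rw [hF]; ext x; simp [Set.mem_inter_iff]; tauto
  have hzero : ∀ z, ((Measure.count.restrict s) (K ∩ cell n z) = 0 ↔ z ∉ idx n '' F) := by
    intro z
    rw [hcell z, Measure.count_eq_zero_iff]
    constructor
    · rintro h ⟨x, hx, rfl⟩
      exact absurd (Set.eq_empty_iff_forall_notMem.mp h x) (by simp [hx, mem_cell_iff])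
    · intro h
      ext x
      simp only [Set.mem_inter_iff, Set.mem_empty_iff_false, iff_false]
      rintro ⟨hx, hcx⟩
      exact h ⟨x, hx, (mem_cell_iff.mp hcx)⟩
  have himg : (idx n '' F).Finite := hFfin.image _
  have hsum : cnt K n (Measure.count.restrict s) = (himg.toFinset.card : ℝ≥0∞) := by
    rw [cnt, tsum_eq_sum (s := himg.toFinset)
      (fun z hz => if_pos ((hzero z).mpr (by simpa using hz)))]
    rw [Finset.sum_congr rfl (fun z hz => if_neg (fun h => ((hzero z).mp h) (by simpa using hz)))]
    rw [Finset.sum_const, nsmul_eq_mul, mul_one]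
  rw [hsum, hμK, Measure.count_apply_finite F hFfin]
  congr 1
  have h1 : (idx n '' F).ncard = F.ncard := Set.ncard_image_of_injOn hinj
  rwa [Set.ncard_eq_toFinset_card _ himg, Set.ncard_eq_toFinset_card _ hFfin] at h1

/-- `B` is recoverable from avoidance data on simple counting measures. -/
def Good (d : ℕ) (B : Set (Euc d)) : Prop :=
  ∃ g : Measure (Euc d) → ℝ≥0∞, Measurable[G d] g ∧
    ∀ μ : Measure (Euc d), IsSimpleCountingMeasure μ → g μ = μ B

lemma good_compact {K : Set (Euc d)} (hK : IsCompact K) : Good d K := by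
  refine ⟨fun μ => limsup (fun n => cnt K n μ) atTop, ?_, ?_⟩
  · exact Measurable.limsup (mδ := G d) fun n => measurable_cnt hK n
  · intro μ hμ
    show limsup (fun n => cnt K n μ) atTop = μ K
    rw [limsup_congr (cnt_eventually_eq hK hμ), limsup_const]

lemma good_empty : Good d ∅ :=
  ⟨fun _ => 0, measurable_const, fun μ _ => by simp⟩

lemma good_inter_ball (B : Set (Euc d)) (hB : MeasurableSet B) (m : ℕ) :
    Good d (B ∩ Metric.closedBall 0 m) := by
  revert m
  refine MeasurableSpace.induction_on_inter
    (C := fun B _ => ∀ m : ℕ, Good d (B ∩ Metric.closedBall 0 m))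
    (s := {s : Set (Euc d) | IsClosed s})
    (BorelSpace.measurable_eq.trans borel_eq_generateFrom_isClosed)
    (fun s hs t ht _ => hs.inter ht) (fun m => by simpa using good_empty)
    ?base ?compl ?union B hB
  · intro t ht m
    exact good_compact ((isCompact_closedBall (0 : Euc d) m).inter_left ht)
  · intro t htm hgood m
    obtain ⟨g, hg, hgv⟩ := hgood m
    obtain ⟨gC, hgC, hgCv⟩ := good_compact (isCompact_closedBall (0 : Euc d) m)
    refine ⟨fun μ => gC μ - g μ, hgC.sub hg, fun μ hμ => ?_⟩
    show gC μ - g μ = _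
    have hfin : μ (t ∩ Metric.closedBall 0 m) ≠ ⊤ :=
      ((measure_mono Set.inter_subset_right).trans_lt
        (hμ.1 _ (isCompact_closedBall _ _))).ne
    have hadd : μ (Metric.closedBall (0:Euc d) m ∩ t) + μ (Metric.closedBall (0:Euc d) m \ t)
        = μ (Metric.closedBall (0:Euc d) m) := measure_inter_add_diff _ htm
    have h1 : tᶜ ∩ Metric.closedBall (0:Euc d) m = Metric.closedBall (0:Euc d) m \ t := by
      rw [Set.diff_eq, Set.inter_comm]
    rw [hgv μ hμ, hgCv μ hμ, h1]
    refine (ENNReal.eq_sub_of_add_eq hfin ?_).symm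
    rw [Set.inter_comm] at hadd
    rwa [add_comm] at hadd
  · intro f hdisj hmeas hgood m
    choose g hg hgv using fun i => hgood i m
    refine ⟨fun μ => ∑' i, g i μ, Measurable.ennreal_tsum (mα := G d) hg, fun μ hμ => ?_⟩
    have h1 : (⋃ i, f i) ∩ Metric.closedBall (0:Euc d) m
        = ⋃ i, (f i ∩ Metric.closedBall (0:Euc d) m) := by rw [Set.iUnion_inter]
    have hd : Pairwise (Function.onFun Disjoint fun i => f i ∩ Metric.closedBall (0:Euc d) m) :=
      fun i j hij => ((hdisj hij).inf_left _).inf_right _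
    show (∑' i, g i μ) = _
    rw [h1, measure_iUnion hd (fun i => (hmeas i).inter measurableSet_closedBall)]
    exact tsum_congr fun i => hgv i μ hμ

lemma good_all (B : Set (Euc d)) (hB : MeasurableSet B) : Good d B := by
  choose g hg hgv using fun m : ℕ => good_inter_ball B hB m
  refine ⟨fun μ => ⨆ m, g m μ, Measurable.iSup (mδ := G d) hg, fun μ hμ => ?_⟩
  have h1 : B = ⋃ m : ℕ, B ∩ Metric.closedBall (0:Euc d) m := by
    rw [← Set.inter_iUnion]
    refine (Set.inter_eq_left.mpr fun x _ => ?_).symm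
    exact Set.mem_iUnion.mpr ⟨⌈‖x‖⌉₊, by
      simp [Metric.mem_closedBall, dist_zero_right, Nat.le_ceil]⟩
  conv_rhs => rw [h1]
  rw [Directed.measure_iUnion]
  · exact iSup_congr fun m => hgv m μ hμ
  · exact Monotone.directed_le fun a b hab =>
      Set.inter_subset_inter_right _ (Metric.closedBall_subset_closedBall (by exact_mod_cast hab))


lemma measurable_incl :
    @Measurable {μ : Measure (Euc d) // IsSimpleCountingMeasure μ} (Measure (Euc d))
      ((G d).comap Subtype.val) inferInstance Subtype.val := by
  refine @Measure.measurable_of_measurable_coe (Euc d) _ _ ((G d).comap Subtype.val)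
    Subtype.val (fun B hB => ?_)
  obtain ⟨g, hg, hgv⟩ := good_all B hB
  have h : (fun μ : {μ : Measure (Euc d) // IsSimpleCountingMeasure μ} => (μ : Measure (Euc d)) B)
      = fun μ : {μ : Measure (Euc d) // IsSimpleCountingMeasure μ} => g μ :=
    funext fun μ => (hgv μ μ.2).symm
  rw [h]
  exact hg.comp (measurable_iff_comap_le.mpr le_rfl)

theorem main
    {Ω : Type*} [MeasureSpace Ω] [IsProbabilityMeasure (ℙ : Measure Ω)]
    (N N' : Ω → Measure (Euc d))
    (hNmeas : Measurable N) (hN'meas : Measurable N')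
    (hNsimple : ∀ ω, IsSimpleCountingMeasure (N ω)) (hN'simple : ∀ ω, IsSimpleCountingMeasure (N' ω))
    (havoid : ∀ K : Set (Euc d), IsCompact K →
      ℙ {ω | N ω K = 0} = ℙ {ω | N' ω K = 0}) :
    Measure.map N ℙ = Measure.map N' ℙ := by
  have hNG : @Measurable Ω (Measure (Euc d)) _ (G d) N := hNmeas.mono le_rfl G_le
  have hN'G : @Measurable Ω (Measure (Euc d)) _ (G d) N' := hN'meas.mono le_rfl G_le
  have huniv : @MeasurableSet (Measure (Euc d)) (G d) Set.univ :=
    @MeasurableSet.univ _ (G d)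
  -- Step 1: the G-pushforwards agree
  have key : @Measure.map Ω (Measure (Euc d)) _ (G d) N ℙ
      = @Measure.map Ω (Measure (Euc d)) _ (G d) N' ℙ := by
    haveI hfin : @IsFiniteMeasure _ (G d) (@Measure.map Ω (Measure (Euc d)) _ (G d) N ℙ) := by
      constructor
      rw [@Measure.map_apply _ _ _ (G d) _ _ hNG _ huniv, Set.preimage_univ]
      exact measure_lt_top _ _
    refine @ext_of_generate_finite _ (G d) _ _ (avoidSets d) rfl isPiSystem_avoidSets hfin ?_ ?_
    · rintro A hA
      have hAm : @MeasurableSet (Measure (Euc d)) (G d) A :=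
        MeasurableSpace.measurableSet_generateFrom hA
      obtain ⟨K, hK, rfl⟩ := hA
      rw [@Measure.map_apply _ _ _ (G d) _ _ hNG _ hAm,
        @Measure.map_apply _ _ _ (G d) _ _ hN'G _ hAm]
      exact havoid K hK
    · rw [@Measure.map_apply _ _ _ (G d) _ _ hNG _ huniv,
        @Measure.map_apply _ _ _ (G d) _ _ hN'G _ huniv]
      simp
  have hval : ∀ A : Set (Measure (Euc d)), @MeasurableSet (Measure (Euc d)) (G d) A →
      ℙ (N ⁻¹' A) = ℙ (N' ⁻¹' A) := by
    intro A hA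
    have h1 := congrArg (fun ν : @Measure (Measure (Euc d)) (G d) => ν A) key
    rwa [@Measure.map_apply _ _ _ (G d) _ _ hNG _ hA,
      @Measure.map_apply _ _ _ (G d) _ _ hN'G _ hA] at h1
  -- Step 2: transfer to the full σ-algebra
  refine Measure.ext fun A hA => ?_
  obtain ⟨A', hA', hAA'⟩ := measurable_incl (d := d) hA
  have hNA : N ⁻¹' A = N ⁻¹' A' := by
    ext ω
    have := Set.ext_iff.mp hAA' ⟨N ω, hNsimple ω⟩
    simpa using this.symm
  have hN'A : N' ⁻¹' A = N' ⁻¹' A' := by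
    ext ω
    have := Set.ext_iff.mp hAA' ⟨N' ω, hN'simple ω⟩
    simpa using this.symm
  rw [Measure.map_apply hNmeas hA, Measure.map_apply hN'meas hA, hNA, hN'A]
  exact hval A' hA'


end SimplePPAux

/-- A simple point process on `ℝ^d` is determined by its avoidance function: if two
simple point processes satisfy `P(N(K) = 0) = P(N'(K) = 0)` for every compact `K`,
then they have the same distribution. -/
theorem simplePP_determined_by_avoidance
    {Ω : Type*} [MeasureSpace Ω] [IsProbabilityMeasure (ℙ : Measure Ω)] {d : ℕ}
    (N N' : Ω → Measure (EuclideanSpace ℝ (Fin d)))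
    (hNmeas : Measurable N) (hN'meas : Measurable N')
    (hNsimple : ∀ ω, IsSimpleCountingMeasure (N ω))
    (hN'simple : ∀ ω, IsSimpleCountingMeasure (N' ω))
    (havoid : ∀ K : Set (EuclideanSpace ℝ (Fin d)), IsCompact K →
      ℙ {ω | N ω K = 0} = ℙ {ω | N' ω K = 0}) :
    Measure.map N ℙ = Measure.map N' ℙ :=
  SimplePPAux.main N N' hNmeas hN'meas hNsimple hN'simple havoid
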